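/- Let G₁ and G₂ be groups, let A₁ and A₂ be finite alphabets, and let π₁ : A₁* → G₁ and π₂ : A₂* → G₂ be surjective monoid homomorphisms from the free monoids on A₁ and A₂. Set X = A₁ ⊕ A₂ (the disjoint union), let ι₁ : A₁* → X* and ι₂ : A₂* → X* be the monoid embeddings induced by the inclusions of letters, and let π : X* → G₁ ∗ G₂ be the monoid homomorphism into the free product G₁ ∗ G₂ sending each letter of A₁ to the image of its π₁-value under the canonical inclusion G₁ → G₁ ∗ G₂, and each letter of A₂ to the image of its π₂-value under the canonical inclusion G₂ → G₁ ∗ G₂. Let L₁ = π₁⁻¹(1), L₂ = π₂⁻¹(1) and L = π⁻¹(1). Then L is the smallest subset S of X* such that: (i) the empty word ε ∈ S, and (ii) for each i ∈ {1,2}, every w ∈ Lᵢ, and all u, v ∈ X*, if u·v ∈ S then u·ιᵢ(w)·v ∈ S. That is, L itself satisfies (i) and (ii), and L is contained in every subset S of X* satisfying (i) and (ii). -/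

import Mathlib

/-- The word problem of a group `G` with respect to a monoid homomorphism
`π` from a free monoid: the set of words mapping to the identity. -/
def wordProblem {α : Type} {G : Type} [Group G] (π : FreeMonoid α →* G) :
    Set (FreeMonoid α) :=
  {w | π w = 1}



namespace WPAux
variable {A₁ A₂ : Type}

def unchunk : List A₁ ⊕ List A₂ → List (A₁ ⊕ A₂) :=
  Sum.elim (List.map Sum.inl) (List.map Sum.inr)

def chunks : List (A₁ ⊕ A₂) → List (List A₁ ⊕ List A₂)
  | [] => []
  | Sum.inl a :: rest =>
    match chunks rest with
    | Sum.inl t :: cs => Sum.inl (a :: t) :: cs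
    | cs => Sum.inl [a] :: cs
  | Sum.inr b :: rest =>
    match chunks rest with
    | Sum.inr t :: cs => Sum.inr (b :: t) :: cs
    | cs => Sum.inr [b] :: cs

theorem chunks_flat (l : List (A₁ ⊕ A₂)) : (chunks l).flatMap unchunk = l := by
  induction l with
  | nil => rfl
  | cons x rest ih =>
    cases x with
    | inl a =>
      rcases h : chunks rest with _ | ⟨c | c, cs⟩ <;>
        simp_all [chunks, unchunk, List.flatMap_cons]
    | inr b =>
      rcases h : chunks rest with _ | ⟨c | c, cs⟩ <;>
        simp_all [chunks, unchunk, List.flatMap_cons]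

theorem unchunk_ne_nil {l : List (A₁ ⊕ A₂)} {c} (hc : c ∈ chunks l) : unchunk c ≠ [] := by
  induction l generalizing c with
  | nil => simp [chunks] at hc
  | cons x rest ih =>
    cases x with
    | inl a =>
      rcases h : chunks rest with _ | ⟨d | d, cs⟩ <;> rw [chunks, h] at hc <;>
          rcases List.mem_cons.mp hc with rfl | hc
      · simp [unchunk]
      · simp at hc
      · simp [unchunk]
      · exact ih (h ▸ List.mem_cons_of_mem _ hc)
      · simp [unchunk]
      · exact ih (h ▸ hc)
    | inr b =>
      rcases h : chunks rest with _ | ⟨d | d, cs⟩ <;> rw [chunks, h] at hc <;>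
          rcases List.mem_cons.mp hc with rfl | hc
      · simp [unchunk]
      · simp at hc
      · simp [unchunk]
      · exact ih (h ▸ hc)
      · simp [unchunk]
      · exact ih (h ▸ List.mem_cons_of_mem _ hc)

theorem chunks_chain' (l : List (A₁ ⊕ A₂)) :
    (chunks l).Chain' (fun c d => c.isLeft ≠ d.isLeft) := by
  induction l with
  | nil => simp [chunks, List.Chain']
  | cons x rest ih =>
    cases x with
    | inl a =>
      rcases h : chunks rest with _ | ⟨d | d, cs⟩ <;> rw [chunks, h] <;> rw [h] at ih
      · simp [List.Chain']
      · rcases cs with _ | ⟨e, cs⟩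
        · simp [List.Chain']
        · rw [List.Chain', List.isChain_cons_cons] at ih ⊢; exact ⟨ih.1, ih.2⟩
      · rw [List.Chain', List.isChain_cons_cons]; exact ⟨by simp, ih⟩
    | inr b =>
      rcases h : chunks rest with _ | ⟨d | d, cs⟩ <;> rw [chunks, h] <;> rw [h] at ih
      · simp [List.Chain']
      · rw [List.Chain', List.isChain_cons_cons]; exact ⟨by simp, ih⟩
      · rcases cs with _ | ⟨e, cs⟩
        · simp [List.Chain']
        · rw [List.Chain', List.isChain_cons_cons] at ih ⊢; exact ⟨ih.1, ih.2⟩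

end WPAux


namespace WPAux

def Fb (G₁ G₂ : Type) : Bool → Type := fun b => cond b G₁ G₂

instance instFbGroup {G₁ G₂ : Type} [Group G₁] [Group G₂] : ∀ b, Group (Fb G₁ G₂ b) :=
  fun b => match b with
  | true => ‹Group G₁›
  | false => ‹Group G₂›

def ofT (G₁ G₂ : Type) [Group G₁] [Group G₂] : G₁ →* Monoid.CoprodI (Fb G₁ G₂) :=
  Monoid.CoprodI.of (M := Fb G₁ G₂) (i := true)

def ofF (G₁ G₂ : Type) [Group G₁] [Group G₂] : G₂ →* Monoid.CoprodI (Fb G₁ G₂) :=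
  Monoid.CoprodI.of (M := Fb G₁ G₂) (i := false)

def eHom (G₁ G₂ : Type) [Group G₁] [Group G₂] :
    Monoid.Coprod G₁ G₂ →* Monoid.CoprodI (Fb G₁ G₂) :=
  Monoid.Coprod.lift (ofT G₁ G₂) (ofF G₁ G₂)

theorem eHom_inl {G₁ G₂ : Type} [Group G₁] [Group G₂] (x : G₁) :
    eHom G₁ G₂ (Monoid.Coprod.inl x) = ofT G₁ G₂ x :=
  Monoid.Coprod.lift_apply_inl _ _ _

theorem eHom_inr {G₁ G₂ : Type} [Group G₁] [Group G₂] (x : G₂) :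
    eHom G₁ G₂ (Monoid.Coprod.inr x) = ofF G₁ G₂ x :=
  Monoid.Coprod.lift_apply_inr _ _ _

variable {G₁ G₂ A₁ A₂ : Type} [Group G₁] [Group G₂]

def gmap (π₁ : FreeMonoid A₁ →* G₁) (π₂ : FreeMonoid A₂ →* G₂) :
    List A₁ ⊕ List A₂ → Σ b, Fb G₁ G₂ b
  | Sum.inl t => ⟨true, show Fb G₁ G₂ true from π₁ (FreeMonoid.ofList t)⟩
  | Sum.inr t => ⟨false, show Fb G₁ G₂ false from π₂ (FreeMonoid.ofList t)⟩

theorem gmap_fst (π₁ : FreeMonoid A₁ →* G₁) (π₂ : FreeMonoid A₂ →* G₂)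
    (c : List A₁ ⊕ List A₂) : (gmap π₁ π₂ c).fst = c.isLeft := by
  cases c <;> rfl

theorem exists_trivial_chunk (π₁ : FreeMonoid A₁ →* G₁) (π₂ : FreeMonoid A₂ →* G₂)
    (π : FreeMonoid (A₁ ⊕ A₂) →* Monoid.Coprod G₁ G₂)
    (hl : ∀ t : FreeMonoid A₁, π (FreeMonoid.map Sum.inl t) = Monoid.Coprod.inl (π₁ t))
    (hr : ∀ t : FreeMonoid A₂, π (FreeMonoid.map Sum.inr t) = Monoid.Coprod.inr (π₂ t))
    (l : List (A₁ ⊕ A₂)) (h0 : l ≠ []) (h1 : π (FreeMonoid.ofList l) = 1) :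
    ∃ c ∈ chunks l, Sum.elim (fun t => π₁ (FreeMonoid.ofList t) = 1)
      (fun t => π₂ (FreeMonoid.ofList t) = 1) c := by
  by_contra hcon
  push_neg at hcon
  letI : ∀ b, DecidableEq (Fb G₁ G₂ b) := fun b => Classical.decEq _
  have hne : ∀ p ∈ (chunks l).map (gmap π₁ π₂), Sigma.snd p ≠ 1 := by
    intro p hp
    obtain ⟨c, hc, rfl⟩ := List.mem_map.mp hp
    have := hcon c hc
    cases c with
    | inl t => exact this
    | inr t => exact this
  have hch : List.Chain' (fun p q => Sigma.fst p ≠ Sigma.fst q)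
      ((chunks l).map (gmap π₁ π₂)) := by
    rw [List.Chain', List.isChain_map]
    refine (chunks_chain' l).imp ?_
    intro c d hcd
    rw [gmap_fst, gmap_fst]
    exact hcd
  set w : Monoid.CoprodI.Word (Fb G₁ G₂) := ⟨(chunks l).map (gmap π₁ π₂), hne, hch⟩ with hw
  have hprod : w.prod = eHom G₁ G₂ (π (FreeMonoid.ofList l)) := by
    conv_rhs => rw [← chunks_flat l]
    rw [List.flatMap, FreeMonoid.ofList_flatten, map_list_prod π, map_list_prod (eHom G₁ G₂)]
    show ((((chunks l).map (gmap π₁ π₂)).map fun p => Monoid.CoprodI.of p.snd)).prod = _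
    simp only [List.map_map]
    congr 1
    apply List.map_congr_left
    intro c _
    cases c with
    | inl t =>
      show Monoid.CoprodI.of (show Fb G₁ G₂ true from π₁ (FreeMonoid.ofList t))
          = eHom G₁ G₂ (π (FreeMonoid.ofList (List.map Sum.inl t)))
      rw [FreeMonoid.ofList_map, hl, eHom_inl]
      rfl
    | inr t =>
      show Monoid.CoprodI.of (show Fb G₁ G₂ false from π₂ (FreeMonoid.ofList t))
          = eHom G₁ G₂ (π (FreeMonoid.ofList (List.map Sum.inr t)))
      rw [FreeMonoid.ofList_map, hr, eHom_inr]
      rfl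
  rw [h1, map_one] at hprod
  have hwempty : w = Monoid.CoprodI.Word.empty := by
    set eqv := @Monoid.CoprodI.Word.equiv Bool (Fb G₁ G₂) _ instDecidableEqBool
      (fun b => Classical.decEq _) with heqv
    apply eqv.symm.injective
    show w.prod = Monoid.CoprodI.Word.prod Monoid.CoprodI.Word.empty
    rw [hprod, Monoid.CoprodI.Word.prod_empty]
  have hmapnil : (chunks l).map (gmap π₁ π₂) = [] :=
    congrArg Monoid.CoprodI.Word.toList hwempty
  have : chunks l = [] := List.map_eq_nil_iff.mp hmapnil
  exact h0 (by rw [← chunks_flat l, this]; rfl)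

end WPAux

/-- Lemma: the word problem of a free product `G₁ ∗ G₂` is the smallest set `S`
of words over the disjoint union alphabet `X = A₁ ⊕ A₂` such that `ε ∈ S` and,
for `i ∈ {1,2}`, for every `w` in the word problem of `Gᵢ` and all words `u, v`
over `X`, if `u · v ∈ S` then `u · ιᵢ(w) · v ∈ S`. -/
theorem wordProblem_freeProduct_smallest
    {G₁ G₂ : Type} [Group G₁] [Group G₂]
    (A₁ A₂ : Type) [Fintype A₁] [Fintype A₂]
    (π₁ : FreeMonoid A₁ →* G₁) (π₂ : FreeMonoid A₂ →* G₂)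
    (hπ₁ : Function.Surjective π₁) (hπ₂ : Function.Surjective π₂)
    (π : FreeMonoid (A₁ ⊕ A₂) →* Monoid.Coprod G₁ G₂)
    (hπl : ∀ a : A₁, π (FreeMonoid.of (Sum.inl a)) =
      Monoid.Coprod.inl (π₁ (FreeMonoid.of a)))
    (hπr : ∀ b : A₂, π (FreeMonoid.of (Sum.inr b)) =
      Monoid.Coprod.inr (π₂ (FreeMonoid.of b))) :
    let ι₁ : FreeMonoid A₁ →* FreeMonoid (A₁ ⊕ A₂) := FreeMonoid.map Sum.inl
    let ι₂ : FreeMonoid A₂ →* FreeMonoid (A₁ ⊕ A₂) := FreeMonoid.map Sum.inr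
    let L₁ := wordProblem π₁
    let L₂ := wordProblem π₂
    let L := wordProblem π
    ((1 : FreeMonoid (A₁ ⊕ A₂)) ∈ L ∧
      (∀ w ∈ L₁, ∀ u v : FreeMonoid (A₁ ⊕ A₂), u * v ∈ L → u * ι₁ w * v ∈ L) ∧
      (∀ w ∈ L₂, ∀ u v : FreeMonoid (A₁ ⊕ A₂), u * v ∈ L → u * ι₂ w * v ∈ L)) ∧
    (∀ S : Set (FreeMonoid (A₁ ⊕ A₂)),
      ((1 : FreeMonoid (A₁ ⊕ A₂)) ∈ S ∧
        (∀ w ∈ L₁, ∀ u v : FreeMonoid (A₁ ⊕ A₂), u * v ∈ S → u * ι₁ w * v ∈ S) ∧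
        (∀ w ∈ L₂, ∀ u v : FreeMonoid (A₁ ⊕ A₂), u * v ∈ S → u * ι₂ w * v ∈ S)) →
      L ⊆ S) := by
  intro ι₁ ι₂ L₁ L₂ L
  have key₁ : ∀ t : FreeMonoid A₁, π (ι₁ t) = Monoid.Coprod.inl (π₁ t) := by
    have h : π.comp ι₁ = (Monoid.Coprod.inl).comp π₁ :=
      FreeMonoid.hom_eq fun a => by
        simp only [MonoidHom.comp_apply, ι₁, FreeMonoid.map_of]
        exact hπl a
    intro t
    simpa only [MonoidHom.comp_apply] using DFunLike.congr_fun h t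
  have key₂ : ∀ t : FreeMonoid A₂, π (ι₂ t) = Monoid.Coprod.inr (π₂ t) := by
    have h : π.comp ι₂ = (Monoid.Coprod.inr).comp π₂ :=
      FreeMonoid.hom_eq fun a => by
        simp only [MonoidHom.comp_apply, ι₂, FreeMonoid.map_of]
        exact hπr a
    intro t
    simpa only [MonoidHom.comp_apply] using DFunLike.congr_fun h t
  constructor
  · refine ⟨map_one π, ?_, ?_⟩
    · intro w hw u v huv
      have hw' : π₁ w = 1 := hw
      have huv' : π (u * v) = 1 := huv
      show π (u * ι₁ w * v) = 1
      rw [map_mul, map_mul, key₁, hw', map_one, mul_one, ← map_mul]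
      exact huv'
    · intro w hw u v huv
      have hw' : π₂ w = 1 := hw
      have huv' : π (u * v) = 1 := huv
      show π (u * ι₂ w * v) = 1
      rw [map_mul, map_mul, key₂, hw', map_one, mul_one, ← map_mul]
      exact huv'
  · rintro S ⟨hS1, hSl, hSr⟩
    have main : ∀ n (l : List (A₁ ⊕ A₂)), l.length ≤ n → π (FreeMonoid.ofList l) = 1 →
        FreeMonoid.ofList l ∈ S := by
      intro n
      induction n with
      | zero =>
        intro l hlen _
        have : l = [] := List.eq_nil_of_length_eq_zero (Nat.le_zero.mp hlen)
        subst this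
        exact hS1
      | succ n ih =>
        intro l hlen h1
        rcases eq_or_ne l [] with rfl | h0
        · exact hS1
        obtain ⟨c, hc, hcval⟩ := WPAux.exists_trivial_chunk π₁ π₂ π key₁ key₂ l h0 h1
        obtain ⟨cs₁, cs₂, hsplit⟩ := List.append_of_mem hc
        have hflat : l = (cs₁.flatMap WPAux.unchunk) ++
            (WPAux.unchunk c ++ (cs₂.flatMap WPAux.unchunk)) := by
          conv_lhs => rw [← WPAux.chunks_flat l]
          rw [hsplit, List.flatMap_append, List.flatMap_cons]
        set u := FreeMonoid.ofList (cs₁.flatMap WPAux.unchunk) with hu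
        set v := FreeMonoid.ofList (cs₂.flatMap WPAux.unchunk) with hv
        have hlen2 : (cs₁.flatMap WPAux.unchunk ++ cs₂.flatMap WPAux.unchunk).length ≤ n := by
          have h3 := congrArg List.length hflat
          have hne := WPAux.unchunk_ne_nil (l := l) hc
          have h4 : 1 ≤ (WPAux.unchunk c).length := List.length_pos_iff.mpr hne
          simp only [List.length_append] at h3 ⊢
          omega
        have h5 : FreeMonoid.ofList (cs₁.flatMap WPAux.unchunk ++ cs₂.flatMap WPAux.unchunk)
            = u * v := FreeMonoid.ofList_append _ _
        cases c with
        | inl t =>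
          have hval : π₁ (FreeMonoid.ofList t) = 1 := hcval
          have hι : FreeMonoid.ofList (WPAux.unchunk (Sum.inl t))
              = ι₁ (FreeMonoid.ofList t) := FreeMonoid.ofList_map _ _
          have hldecomp : FreeMonoid.ofList l = u * (ι₁ (FreeMonoid.ofList t) * v) := by
            conv_lhs => rw [hflat]
            rw [FreeMonoid.ofList_append, FreeMonoid.ofList_append, hι]
          have hπuv : π (u * v) = 1 := by
            have h6 := h1
            rw [hldecomp, map_mul, map_mul, key₁, hval, map_one, one_mul, ← map_mul] at h6
            exact h6
          have huvS : u * v ∈ S := by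
            have := ih _ hlen2 (by rw [h5]; exact hπuv)
            rwa [h5] at this
          have := hSl (FreeMonoid.ofList t) hval u v huvS
          rw [hldecomp, ← mul_assoc]
          exact this
        | inr t =>
          have hval : π₂ (FreeMonoid.ofList t) = 1 := hcval
          have hι : FreeMonoid.ofList (WPAux.unchunk (Sum.inr t))
              = ι₂ (FreeMonoid.ofList t) := FreeMonoid.ofList_map _ _
          have hldecomp : FreeMonoid.ofList l = u * (ι₂ (FreeMonoid.ofList t) * v) := by
            conv_lhs => rw [hflat]
            rw [FreeMonoid.ofList_append, FreeMonoid.ofList_append, hι]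
          have hπuv : π (u * v) = 1 := by
            have h6 := h1
            rw [hldecomp, map_mul, map_mul, key₂, hval, map_one, one_mul, ← map_mul] at h6
            exact h6
          have huvS : u * v ∈ S := by
            have := ih _ hlen2 (by rw [h5]; exact hπuv)
            rwa [h5] at this
          have := hSr (FreeMonoid.ofList t) hval u v huvS
          rw [hldecomp, ← mul_assoc]
          exact this
    intro x hx
    have hx' : π (FreeMonoid.ofList (FreeMonoid.toList x)) = 1 := hx
    have := main (FreeMonoid.toList x).length (FreeMonoid.toList x) le_rfl hx'
    rwa [FreeMonoid.ofList_toList] at this
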